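/- For every real x > 0, −∑_{k=1}^∞ ψ(2k+1) x^k / Γ(2k+1) = cosh(√x)·(Chi(√x) − ln √x) − Shi(√x)·sinh(√x) − γ. (This is the value (2.10) of the derivative of the integral Mittag-Leffler function with respect to α at α = 2, β = 1.) -/

import Mathlib

open scoped BigOperators

/-- The digamma function `ψ(x) = Γ'(x)/Γ(x)`. -/
noncomputable def digamma (x : ℝ) : ℝ := deriv Real.Gamma x / Real.Gamma x

/-- The hyperbolic sine integral `Shi(y) = ∫₀^y sinh t / t dt`. -/
noncomputable def Shi (y : ℝ) : ℝ := ∫ t in (0 : ℝ)..y, Real.sinh t / t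

/-- The hyperbolic cosine integral `Chi(y) = γ + ln y − ∫₀^y (1 − cosh t)/t dt`. -/
noncomputable def Chi (y : ℝ) : ℝ :=
  Real.eulerMascheroniConstant + Real.log y - ∫ t in (0 : ℝ)..y, (1 - Real.cosh t) / t

namespace ML210

open MeasureTheory Finset Nat

local notation "γ" => Real.eulerMascheroniConstant

lemma harmonic_le_nat (n : ℕ) : (harmonic n : ℝ) ≤ n := by
  induction n with
  | zero => simp
  | succ n ih =>
    rw [harmonic_succ]
    push_cast
    have h : ((n : ℝ) + 1)⁻¹ ≤ 1 := by
      rw [inv_le_one_iff₀]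
      right; linarith [Nat.cast_nonneg (α := ℝ) n]
    linarith

lemma hasSum_cosh_aux (y : ℝ) :
    HasSum (fun k : ℕ => y ^ (2 * k + 2) / (2 * k + 2)!) (Real.cosh y - 1) := by
  have h : HasSum (fun n : ℕ => y ^ (2 * n) / (2 * n)!)
      ((Real.cosh y - 1) + ∑ i ∈ range 1, y ^ (2 * i) / (2 * i)!) := by
    simpa using Real.hasSum_cosh y
  exact (hasSum_nat_add_iff (f := fun n : ℕ => y ^ (2 * n) / (2 * n)!) 1).2 h

lemma digamma_nat (n : ℕ) : digamma ((n : ℝ) + 1) = -γ + (harmonic n : ℝ) := by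
  unfold digamma
  rw [Real.deriv_Gamma_nat, Real.Gamma_nat_eq_factorial, mul_div_cancel_left₀]
  exact Nat.cast_ne_zero.2 n.factorial_ne_zero

lemma sinh_mul_le {y s : ℝ} (hy : 0 ≤ y) (h0 : 0 ≤ s) (h1 : s ≤ 1) :
    Real.sinh (y * s) ≤ s * Real.sinh y := by
  refine hasSum_le (fun n => ?_) (Real.hasSum_sinh (y * s)) ((Real.hasSum_sinh y).mul_left s)
  have hs : s ^ (2 * n + 1) ≤ s := by
    calc s ^ (2 * n + 1) ≤ s ^ 1 := pow_le_pow_of_le_one h0 h1 (by omega)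
    _ = s := pow_one s
  calc (y * s) ^ (2 * n + 1) / (2 * n + 1)!
      = (y ^ (2 * n + 1) / (2 * n + 1)!) * s ^ (2 * n + 1) := by rw [mul_pow]; ring
    _ ≤ (y ^ (2 * n + 1) / (2 * n + 1)!) * s := by gcongr
    _ = s * (y ^ (2 * n + 1) / (2 * n + 1)!) := mul_comm _ _

lemma cosh_mul_le {y s : ℝ} (hy : 0 ≤ y) (h0 : 0 ≤ s) (h1 : s ≤ 1) :
    Real.cosh (y * s) - 1 ≤ s * (Real.cosh y - 1) := by
  refine hasSum_le (fun n => ?_) (hasSum_cosh_aux (y * s)) ((hasSum_cosh_aux y).mul_left s)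
  have hs : s ^ (2 * n + 2) ≤ s := by
    calc s ^ (2 * n + 2) ≤ s ^ 1 := pow_le_pow_of_le_one h0 h1 (by omega)
    _ = s := pow_one s
  calc (y * s) ^ (2 * n + 2) / (2 * n + 2)!
      = (y ^ (2 * n + 2) / (2 * n + 2)!) * s ^ (2 * n + 2) := by rw [mul_pow]; ring
    _ ≤ (y ^ (2 * n + 2) / (2 * n + 2)!) * s := by gcongr
    _ = s * (y ^ (2 * n + 2) / (2 * n + 2)!) := mul_comm _ _

lemma intInt_sinh (y : ℝ) (hy : 0 ≤ y) :
    IntervalIntegrable (fun s => Real.sinh (y * s) / s) volume 0 1 := by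
  rw [intervalIntegrable_iff_integrableOn_Ioc_of_le zero_le_one]
  constructor
  · exact ((Real.measurable_sinh.comp (measurable_const.mul measurable_id)).div
      measurable_id).aestronglyMeasurable
  · apply HasFiniteIntegral.of_bounded (C := Real.sinh y)
    filter_upwards [ae_restrict_mem measurableSet_Ioc] with s hs
    have h0 : 0 < s := hs.1
    have hnn : 0 ≤ Real.sinh (y * s) := Real.sinh_nonneg_iff.2 (mul_nonneg hy h0.le)
    rw [Real.norm_eq_abs, abs_of_nonneg (div_nonneg hnn h0.le), div_le_iff₀ h0]
    calc Real.sinh (y * s) ≤ s * Real.sinh y := sinh_mul_le hy h0.le hs.2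
    _ = Real.sinh y * s := mul_comm _ _

lemma intInt_cosh (y : ℝ) (hy : 0 ≤ y) :
    IntervalIntegrable (fun s => (1 - Real.cosh (y * s)) / s) volume 0 1 := by
  rw [intervalIntegrable_iff_integrableOn_Ioc_of_le zero_le_one]
  constructor
  · exact (((measurable_const.sub
      (Real.measurable_cosh.comp (measurable_const.mul measurable_id)))).div
      measurable_id).aestronglyMeasurable
  · apply HasFiniteIntegral.of_bounded (C := Real.cosh y - 1)
    filter_upwards [ae_restrict_mem measurableSet_Ioc] with s hs
    have h0 : 0 < s := hs.1
    have hc : 1 ≤ Real.cosh (y * s) := Real.one_le_cosh _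
    have : ‖(1 - Real.cosh (y * s)) / s‖ = (Real.cosh (y * s) - 1) / s := by
      rw [Real.norm_eq_abs, abs_div, abs_of_pos h0,
        abs_of_nonpos (by linarith), neg_sub]
    rw [this, div_le_iff₀ h0]
    calc Real.cosh (y * s) - 1 ≤ s * (Real.cosh y - 1) := cosh_mul_le hy h0.le hs.2
    _ = (Real.cosh y - 1) * s := mul_comm _ _

lemma subst_sinh (y : ℝ) (hy : 0 < y) :
    (∫ s in (0 : ℝ)..1, Real.sinh (y * s) / s) = ∫ t in (0 : ℝ)..y, Real.sinh t / t := by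
  have h : ∀ s : ℝ, Real.sinh (y * s) / s = y * (Real.sinh (y * s) / (y * s)) := by
    intro s
    rcases eq_or_ne s 0 with rfl | hs
    · simp
    · rw [show y * (Real.sinh (y * s) / (y * s)) = y * Real.sinh (y * s) / (y * s) from
        (mul_div_assoc _ _ _).symm, mul_div_mul_left _ _ hy.ne']
  simp_rw [h]
  rw [intervalIntegral.integral_const_mul,
    intervalIntegral.integral_comp_mul_left (f := fun t => Real.sinh t / t) hy.ne']
  simp only [mul_zero, mul_one, smul_eq_mul]
  rw [← mul_assoc, mul_inv_cancel₀ hy.ne', one_mul]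

lemma subst_cosh (y : ℝ) (hy : 0 < y) :
    (∫ s in (0 : ℝ)..1, (1 - Real.cosh (y * s)) / s) =
      ∫ t in (0 : ℝ)..y, (1 - Real.cosh t) / t := by
  have h : ∀ s : ℝ, (1 - Real.cosh (y * s)) / s = y * ((1 - Real.cosh (y * s)) / (y * s)) := by
    intro s
    rcases eq_or_ne s 0 with rfl | hs
    · simp
    · rw [show y * ((1 - Real.cosh (y * s)) / (y * s)) = y * (1 - Real.cosh (y * s)) / (y * s) from
        (mul_div_assoc _ _ _).symm, mul_div_mul_left _ _ hy.ne']
  simp_rw [h]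
  rw [intervalIntegral.integral_const_mul,
    intervalIntegral.integral_comp_mul_left (f := fun t => (1 - Real.cosh t) / t) hy.ne']
  simp only [mul_zero, mul_one, smul_eq_mul]
  rw [← mul_assoc, mul_inv_cancel₀ hy.ne', one_mul]

/-- The summand for the sum-integral swap. -/
noncomputable def F (y : ℝ) (k : ℕ) (s : ℝ) : ℝ :=
  y ^ (2 * k + 2) / (2 * k + 2)! * ∑ m ∈ range (2 * k + 2), s ^ m

lemma F_cont (y : ℝ) (k : ℕ) : Continuous (F y k) :=
  continuous_const.mul (continuous_finset_sum _ fun m _ => continuous_pow m)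

lemma integral_F (y : ℝ) (k : ℕ) :
    (∫ s in Set.Ioc (0 : ℝ) 1, F y k s) =
      y ^ (2 * k + 2) / (2 * k + 2)! * (harmonic (2 * k + 2) : ℝ) := by
  rw [← intervalIntegral.integral_of_le zero_le_one]
  unfold F
  rw [intervalIntegral.integral_const_mul,
    intervalIntegral.integral_finset_sum (fun m _ => intervalIntegral.intervalIntegrable_pow m)]
  congr 1
  rw [harmonic]
  push_cast
  refine Finset.sum_congr rfl fun m _ => ?_
  rw [integral_pow]
  norm_num

lemma hasSum_F (y : ℝ) {s : ℝ} (hs : s ≠ 1) :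
    HasSum (fun k => F y k s) ((Real.cosh y - Real.cosh (y * s)) / (1 - s)) := by
  have h := ((hasSum_cosh_aux y).sub (hasSum_cosh_aux (y * s))).div_const (1 - s)
  have he : Real.cosh y - 1 - (Real.cosh (y * s) - 1) = Real.cosh y - Real.cosh (y * s) := by
    ring
  rw [he] at h
  convert h using 2 with k
  · rfl
  unfold F
  rw [geom_sum_eq hs, mul_pow]
  have h1 : s - 1 ≠ 0 := sub_ne_zero.2 hs
  have h1' : (1 : ℝ) - s ≠ 0 := fun hcon => h1 (by linarith [sub_eq_zero.1 hcon])
  field_simp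
  ring

lemma hasSum_S (y : ℝ) :
    HasSum (fun k : ℕ => y ^ (2 * k + 2) / (2 * k + 2)! * (harmonic (2 * k + 2) : ℝ))
      (∫ s in Set.Ioc (0 : ℝ) 1, (Real.cosh y - Real.cosh (y * s)) / (1 - s)) := by
  have hint : ∀ k : ℕ, Integrable (F y k) (volume.restrict (Set.Ioc (0 : ℝ) 1)) := fun k =>
    (F_cont y k).integrableOn_Ioc
  have hnorm : ∀ k : ℕ, (∫ s in Set.Ioc (0 : ℝ) 1, ‖F y k s‖) =
      |y ^ (2 * k + 2)| / (2 * k + 2)! * (harmonic (2 * k + 2) : ℝ) := by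
    intro k
    have habs : |y ^ (2 * k + 2)| = y ^ (2 * k + 2) := abs_of_nonneg ((even_add_one.2 (by simp [parity_simps])).pow_nonneg y)
    rw [habs, ← integral_F y k]
    refine setIntegral_congr_fun measurableSet_Ioc fun s hs => ?_
    have hnn : 0 ≤ F y k s :=
      mul_nonneg (div_nonneg ((even_add_one.2 (by simp [parity_simps])).pow_nonneg y)
        (Nat.cast_nonneg _)) (Finset.sum_nonneg fun m _ => pow_nonneg hs.1.le m)
    exact Real.norm_of_nonneg hnn
  have habs : ∀ k : ℕ, |y ^ (2 * k + 2)| = y ^ (2 * k + 2) := fun k =>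
    abs_of_nonneg ((even_add_one.2 (by simp [parity_simps])).pow_nonneg y)
  have hsum : Summable (fun k : ℕ => ∫ s in Set.Ioc (0 : ℝ) 1, ‖F y k s‖) := by
    simp_rw [hnorm, habs]
    have hmaj : Summable (fun k : ℕ => y * (y ^ (2 * k + 1) / (2 * k + 1)!)) := by
      apply Summable.mul_left
      exact (Real.summable_pow_div_factorial y).comp_injective
        (i := fun k : ℕ => 2 * k + 1) (fun a b h => by simp only [] at h; omega)
    refine hmaj.of_nonneg_of_le (fun k => ?_) (fun k => ?_)
    · exact mul_nonneg (div_nonneg ((even_add_one.2 (by simp [parity_simps])).pow_nonneg y)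
        (Nat.cast_nonneg _)) (by exact_mod_cast (harmonic_pos (by omega : 2 * k + 2 ≠ 0)).le)
    · have hfac : ((2 * k + 2)! : ℝ) = ((2 * k + 2 : ℕ) : ℝ) * ((2 * k + 1)! : ℝ) := by
        exact_mod_cast congrArg (Nat.cast (R := ℝ)) (Nat.factorial_succ (2 * k + 1))
      have hple : y ^ (2 * k + 2) / (2 * k + 2)! * (harmonic (2 * k + 2) : ℝ)
          ≤ y ^ (2 * k + 2) / (2 * k + 2)! * ((2 * k + 2 : ℕ) : ℝ) := by
        gcongr
        · exact div_nonneg ((even_add_one.2 (by simp [parity_simps])).pow_nonneg y)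
            (Nat.cast_nonneg _)
        · exact harmonic_le_nat _
      refine hple.trans (le_of_eq ?_)
      rw [hfac]
      have h2 : ((2 * k + 2 : ℕ) : ℝ) ≠ 0 := by positivity
      have h3 : ((2 * k + 1)! : ℝ) ≠ 0 := by positivity
      field_simp
      ring
  have h := MeasureTheory.hasSum_integral_of_summable_integral_norm hint hsum
  have heq : (∫ s in Set.Ioc (0 : ℝ) 1, ∑' k, F y k s) =
      ∫ s in Set.Ioc (0 : ℝ) 1, (Real.cosh y - Real.cosh (y * s)) / (1 - s) := by
    rw [integral_Ioc_eq_integral_Ioo, integral_Ioc_eq_integral_Ioo]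
    refine setIntegral_congr_fun measurableSet_Ioo fun s hs => ?_
    exact (hasSum_F y hs.2.ne).tsum_eq
  rw [heq] at h
  convert h using 2 with k
  · rfl
  rw [integral_F]

lemma S_eq (y : ℝ) (hy : 0 < y) :
    (∫ s in Set.Ioc (0 : ℝ) 1, (Real.cosh y - Real.cosh (y * s)) / (1 - s)) =
      Real.sinh y * Shi y + Real.cosh y * ∫ t in (0 : ℝ)..y, (1 - Real.cosh t) / t := by
  rw [← intervalIntegral.integral_of_le zero_le_one]
  have hrefl : (∫ s in (0 : ℝ)..1, (Real.cosh y - Real.cosh (y * s)) / (1 - s)) =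
      ∫ s in (0 : ℝ)..1, (Real.cosh y - Real.cosh (y * (1 - s))) / s := by
    have h := intervalIntegral.integral_comp_sub_left (a := (0 : ℝ)) (b := 1)
      (fun s => (Real.cosh y - Real.cosh (y * s)) / (1 - s)) 1
    simp only [sub_sub_cancel, sub_zero, sub_self] at h
    exact h.symm
  rw [hrefl]
  have hsplit : ∀ s : ℝ, (Real.cosh y - Real.cosh (y * (1 - s))) / s =
      Real.sinh y * (Real.sinh (y * s) / s) + Real.cosh y * ((1 - Real.cosh (y * s)) / s) := by
    intro s
    rw [show y * (1 - s) = y - y * s by ring, Real.cosh_sub]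
    ring
  simp_rw [hsplit]
  rw [intervalIntegral.integral_add ((intInt_sinh y hy.le).const_mul _)
    ((intInt_cosh y hy.le).const_mul _),
    intervalIntegral.integral_const_mul, intervalIntegral.integral_const_mul,
    subst_sinh y hy, subst_cosh y hy, Shi]

end ML210

open ML210 Nat in
/-- **Value (2.10)**: for every real `x > 0`,
`−∑_{k=1}^∞ ψ(2k+1) x^k / Γ(2k+1) = cosh √x (Chi √x − ln √x) − Shi √x · sinh √x − γ`. -/
theorem integral_mittagLeffler_alpha_deriv_two_one (x : ℝ) (hx : 0 < x) :
    -∑' k : ℕ,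
        digamma (2 * ((k : ℝ) + 1) + 1) * x ^ (k + 1) / Real.Gamma (2 * ((k : ℝ) + 1) + 1) =
      Real.cosh (Real.sqrt x) * (Chi (Real.sqrt x) - Real.log (Real.sqrt x)) -
        Shi (Real.sqrt x) * Real.sinh (Real.sqrt x) - Real.eulerMascheroniConstant := by
  set y := Real.sqrt x with hy_def
  have hy : 0 < y := Real.sqrt_pos.2 hx
  have hyx : y ^ 2 = x := Real.sq_sqrt hx.le
  have hterm : ∀ k : ℕ,
      digamma (2 * ((k : ℝ) + 1) + 1) * x ^ (k + 1) / Real.Gamma (2 * ((k : ℝ) + 1) + 1) =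
        -Real.eulerMascheroniConstant * (y ^ (2 * k + 2) / (2 * k + 2)!) +
          y ^ (2 * k + 2) / (2 * k + 2)! * (harmonic (2 * k + 2) : ℝ) := by
    intro k
    have hcast : 2 * ((k : ℝ) + 1) + 1 = ((2 * k + 2 : ℕ) : ℝ) + 1 := by push_cast; ring
    have hxpow : x ^ (k + 1) = y ^ (2 * k + 2) := by
      rw [← hyx, ← pow_mul, Nat.mul_succ]
    rw [hcast, digamma_nat, Real.Gamma_nat_eq_factorial, hxpow]
    ring
  rw [tsum_congr hterm]
  have hS := hasSum_S y
  have hC := (hasSum_cosh_aux y).mul_left (-Real.eulerMascheroniConstant)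
  have htot := hC.add hS
  rw [htot.tsum_eq, S_eq y hy, Chi]
  ring
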